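/- Let S be a finite 𝒥-above semigroup, i.e., for every a ∈ S the set { x ∈ S : a ≤_𝒥 x } is finite, where a ≤_𝒥 x means a = x, or a ∈ xS, or a ∈ Sx, or a ∈ SxS. Then S belongs to Tak(𝒮): every ascending chain of subsemigroups of S of bounded rank is stationary. -/

import Mathlib

open Subsemigroup

private def Jrel {S : Type*} [Semigroup S] (a x : S) : Prop :=
  a = x ∨ (∃ s, a = x * s) ∨ (∃ s, a = s * x) ∨ ∃ s t, a = s * x * t

private lemma jrel_iff {S : Type*} [Semigroup S] (a x : S) :
    Jrel a x ↔ ∃ s t : WithOne S, (a : WithOne S) = s * x * t := by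
  constructor
  · rintro (rfl | ⟨s, rfl⟩ | ⟨s, rfl⟩ | ⟨s, t, rfl⟩)
    · exact ⟨1, 1, by simp⟩
    · exact ⟨1, s, by simp⟩
    · exact ⟨s, 1, by simp⟩
    · exact ⟨s, t, by simp [mul_assoc]⟩
  · rintro ⟨s, t, h⟩
    induction s using WithOne.recOneCoe <;> induction t using WithOne.recOneCoe <;>
      simp only [one_mul, mul_one, ← WithOne.coe_mul, WithOne.coe_inj] at h
    · exact Or.inl h
    · exact Or.inr (Or.inl ⟨_, h⟩)
    · exact Or.inr (Or.inr (Or.inl ⟨_, h⟩))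
    · exact Or.inr (Or.inr (Or.inr ⟨_, _, h⟩))

private lemma jrel_trans {S : Type*} [Semigroup S] {a b c : S}
    (h1 : Jrel a b) (h2 : Jrel b c) : Jrel a c := by
  rw [jrel_iff] at *
  obtain ⟨s, t, h1⟩ := h1
  obtain ⟨u, v, h2⟩ := h2
  exact ⟨s * u, v * t, by rw [h1, h2]; simp [mul_assoc]⟩

private lemma mem_closure_inter {S : Type*} [Semigroup S] {A : Set S} {a : S}
    (h : a ∈ closure A) : a ∈ closure (A ∩ {x | Jrel a x}) := by
  induction h using closure_induction with
  | mem x hx => exact subset_closure ⟨hx, Or.inl rfl⟩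
  | mul x y hx hy px py =>
      have hxm : Jrel (x * y) x := Or.inr (Or.inl ⟨y, rfl⟩)
      have hym : Jrel (x * y) y := Or.inr (Or.inr (Or.inl ⟨x, rfl⟩))
      refine mul_mem (closure_mono ?_ px) (closure_mono ?_ py)
      · exact Set.inter_subset_inter_right _ fun z hz => jrel_trans hxm hz
      · exact Set.inter_subset_inter_right _ fun z hz => jrel_trans hym hz

private lemma pigeonhole {S : Type*} {I : Set ℕ} (hI : I.Infinite)
    (g : ℕ → Finset S) (G : Finset S) (hg : ∀ n, g n ⊆ G) :
    ∃ B, {n ∈ I | g n = B}.Infinite := by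
  by_contra h
  push_neg at h
  have hsub : I ⊆ ⋃ B ∈ G.powerset, {n ∈ I | g n = B} := by
    intro n hn
    exact Set.mem_biUnion (Finset.mem_powerset.2 (hg n)) ⟨hn, rfl⟩
  exact hI ((Set.Finite.biUnion G.powerset.finite_toSet fun B _ => h B).subset hsub)

/-- a finite 𝒥-above semigroup belongs to Tak(𝒮): if for every
`a` the set of `x` with `a ≤_𝒥 x` (i.e. `a ∈ S¹xS¹`) is finite, then every
ascending chain of subsemigroups of bounded rank is stationary. -/
theorem stmt_7 (S : Type*) [Semigroup S]
    (hfin : ∀ a : S, {x : S | a = x ∨ (∃ s, a = x * s) ∨ (∃ s, a = s * x) ∨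
      ∃ s t, a = s * x * t}.Finite)
    (M : ℕ) (T : ℕ → Subsemigroup S) (hmono : Monotone T)
    (hrk : ∀ n, ∃ A : Finset S, A.card ≤ M ∧
      Subsemigroup.closure (A : Set S) = T n) :
    ∃ p, ∀ n, p ≤ n → T n = T p := by
  classical
  choose A hA hAT using hrk
  have hfin' : ∀ a : S, {x : S | Jrel a x}.Finite := hfin
  set Fs : S → Finset S := fun a => (hfin' a).toFinset with hFs
  have hFsmem : ∀ a x : S, x ∈ Fs a ↔ Jrel a x := fun a x => (hfin' a).mem_toFinset
  by_cases hne : ∃ a : S, ∃ n, a ∈ T n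
  swap
  · refine ⟨0, fun n _ => ?_⟩
    ext x
    constructor
    · exact fun h => absurd ⟨x, n, h⟩ hne
    · exact fun h => absurd ⟨x, 0, h⟩ hne
  -- the class of "limit generating sets"
  set C : Finset S → Prop :=
    fun B => ∃ a : S, {n | a ∈ T n ∧ A n ∩ Fs a = B}.Infinite with hC
  -- produce an element of C from any a present in infinitely many T n
  have genC : ∀ (a : S) (I : Set ℕ), I.Infinite → (∀ n ∈ I, a ∈ T n) →
      ∃ B, {n ∈ I | A n ∩ Fs a = B}.Infinite := by
    intro a I hI ha
    exact pigeonhole hI (fun n => A n ∩ Fs a) (Fs a) (fun n => Finset.inter_subset_right)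
  -- every element of C has card ≤ M
  have cardC : ∀ B, C B → B.card ≤ M := by
    rintro B ⟨a, hB⟩
    obtain ⟨n, -, hn⟩ := hB.nonempty
    exact hn ▸ le_trans (Finset.card_le_card Finset.inter_subset_left) (hA n)
  -- C is nonempty
  have hCne : ∃ B, C B := by
    obtain ⟨a, m, ham⟩ := hne
    have hI : (Set.Ici m).Infinite := Set.Ici_infinite m
    obtain ⟨B, hB⟩ := genC a _ hI (fun n hn => hmono hn ham)
    refine ⟨B, a, hB.mono ?_⟩
    rintro n ⟨hn, h⟩
    exact ⟨hmono hn ham, h⟩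
  -- pick B in C of maximal cardinality
  have hbdd : BddAbove (Finset.card '' {B | C B}) := ⟨M, by rintro k ⟨B, hB, rfl⟩; exact cardC B hB⟩
  have hKne : (Finset.card '' {B | C B}).Nonempty := by
    obtain ⟨B, hB⟩ := hCne; exact ⟨B.card, B, hB, rfl⟩
  obtain ⟨B, hBC, hBcard⟩ := Nat.sSup_mem hKne hbdd
  have hmax : ∀ B', C B' → B'.card ≤ B.card := by
    intro B' hB'
    rw [hBcard]
    exact le_csSup hbdd ⟨B', hB', rfl⟩
  obtain ⟨a, hI⟩ := hBC
  set I : Set ℕ := {n | a ∈ T n ∧ A n ∩ Fs a = B} with hIdef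
  -- main claim: every element of the union lies in closure B
  have main : ∀ t : S, ∀ m, t ∈ T m → t ∈ closure (B : Set S) := by
    by_contra hcon
    push_neg at hcon
    obtain ⟨t, m, htm, htB⟩ := hcon
    set a' : S := a * t with ha'
    have hJa : Jrel a' a := Or.inr (Or.inl ⟨t, rfl⟩)
    have hJt : Jrel a' t := Or.inr (Or.inr (Or.inl ⟨a, rfl⟩))
    have hFsub : Fs a ⊆ Fs a' := by
      intro x hx
      exact (hFsmem a' x).2 (jrel_trans hJa ((hFsmem a x).1 hx))
    -- indices where everything is present
    have hI' : (I ∩ Set.Ici m).Infinite := by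
      have := hI.diff (Set.finite_Iio m)
      refine this.mono ?_
      intro n hn
      exact ⟨hn.1, Set.mem_Ici.2 (not_lt.1 fun hlt => hn.2 hlt)⟩
    obtain ⟨B', hB'⟩ := genC a' _ hI' (fun n hn => mul_mem hn.1.1 (hmono hn.2 htm))
    obtain ⟨n₁, hn₁⟩ := hB'.nonempty
    obtain ⟨⟨⟨han₁, hBn₁⟩, hmn₁⟩, hB'n₁⟩ := hn₁
    have htn₁ : t ∈ T n₁ := hmono hmn₁ htm
    -- B ⊆ B'
    have hBB' : B ⊆ B' := by
      rw [← hBn₁, ← hB'n₁]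
      exact Finset.inter_subset_inter le_rfl hFsub
    -- t ∈ closure B'
    have htB' : t ∈ closure (B' : Set S) := by
      have h1 : t ∈ closure ((A n₁ : Set S) ∩ {x | Jrel t x}) :=
        mem_closure_inter (by rw [hAT n₁]; exact htn₁)
      refine closure_mono ?_ h1
      rw [← hB'n₁, Finset.coe_inter]
      refine Set.inter_subset_inter_right _ ?_
      intro z hz
      rw [Set.Finite.coe_toFinset]
      exact jrel_trans hJt hz
    -- strictness
    have hss : B ⊂ B' := by
      refine ⟨hBB', fun hB'B => htB ?_⟩
      exact closure_mono (Finset.coe_subset.2 hB'B) htB'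
    have : B'.card ≤ B.card := by
      refine hmax B' ⟨a', hB'.mono ?_⟩
      rintro n ⟨⟨⟨hanT, -⟩, hm⟩, hval⟩
      exact ⟨mul_mem hanT (hmono hm htm), hval⟩
    exact absurd (Finset.card_lt_card hss) (not_lt.2 this)
  -- conclude
  obtain ⟨p, hap, hBp⟩ := hI.nonempty
  refine ⟨p, fun n hn => le_antisymm ?_ (hmono hn)⟩
  intro t ht
  have h1 : t ∈ closure (B : Set S) := main t n ht
  have h2 : (B : Set S) ⊆ T p := by
    intro x hx
    have : x ∈ A p := by
      rw [← hBp] at hx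
      exact Finset.mem_of_subset Finset.inter_subset_left hx
    rw [← hAT p]
    exact subset_closure this
  exact (closure_le.2 h2) h1
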